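/- Let S be the monoid presented by generators a_0, a_1, a_2, … (indexed by the natural numbers) subject to the relations a_i a_j = a_{j+1} a_i for all i ≤ j. Then the one-element right S-act Θ_S has no SF-precover; that is, there is no S-map g : P → Θ_S with P strongly flat such that every S-map g' : P' → Θ_S from a strongly flat S-act P' factors as g' = g∘f for some S-map f : P' → P. -/

import Mathlib

/-- The defining relations of Kruml's monoid: `aᵢ aⱼ = a_{j+1} aᵢ` for all `i ≤ j`,
as a relation on the free monoid on `ℕ`. -/
inductive KrumlRel : FreeMonoid ℕ → FreeMonoid ℕ → Prop
  | rel (i j : ℕ) : i ≤ j →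
      KrumlRel (FreeMonoid.of i * FreeMonoid.of j) (FreeMonoid.of (j + 1) * FreeMonoid.of i)

/-- Kruml's monoid `S = ⟨a₀, a₁, a₂, … ∣ aᵢaⱼ = a_{j+1}aᵢ for i ≤ j⟩`:
the quotient of the free monoid on `ℕ` by the congruence generated by the relations. -/
abbrev KrumlMonoid : Type := (conGen KrumlRel).Quotient

/-- `act : X → S → X` makes the nonempty set `X` a right `S`-act:
`x·1 = x` and `x·(st) = (x·s)·t`. -/
def IsRightAct {X : Type} (act : X → KrumlMonoid → X) : Prop :=
  Nonempty X ∧ (∀ x, act x 1 = x) ∧ ∀ x s t, act x (s * t) = act (act x s) t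

/-- Condition (P): whenever `x·s = y·t` there exist `z, u, v` with `x = z·u`, `y = z·v`
and `us = vt`. -/
def CondP {X : Type} (act : X → KrumlMonoid → X) : Prop :=
  ∀ x y s t, act x s = act y t →
    ∃ z u v, x = act z u ∧ y = act z v ∧ u * s = v * t

/-- Condition (E): whenever `x·s = x·t` there exist `z, u` with `x = z·u` and `us = ut`. -/
def CondE {X : Type} (act : X → KrumlMonoid → X) : Prop :=
  ∀ x s t, act x s = act x t → ∃ z u, x = act z u ∧ u * s = u * t

/-- A right `S`-act is strongly flat if it satisfies Conditions (P) and (E). -/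
def StronglyFlat {X : Type} (act : X → KrumlMonoid → X) : Prop :=
  CondP act ∧ CondE act

namespace KrumlProof

/-- The generators of Kruml's monoid. -/
def ak (i : ℕ) : KrumlMonoid := (conGen KrumlRel).mk' (FreeMonoid.of i)

theorem ak_rel {i j : ℕ} (h : i ≤ j) : ak i * ak j = ak (j + 1) * ak i := by
  unfold ak
  rw [← map_mul, ← map_mul]
  exact (Con.eq _).2 (ConGen.Rel.of _ _ (KrumlRel.rel i j h))

/-! ### A multiset model, used to show `u * ak 0 ≠ u * ak 1`. -/

/-- number of elements of `L` that are `≤ v`. -/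
def cnt (L : Multiset ℕ) (v : ℕ) : ℕ := (L.filter (· ≤ v)).card

theorem cnt_mono (L : Multiset ℕ) {v w : ℕ} (h : v ≤ w) : cnt L v ≤ cnt L w := by
  apply Multiset.card_le_card
  exact Multiset.monotone_filter_right L (fun a (ha : a ≤ v) => le_trans ha h)

theorem cnt_le_card (L : Multiset ℕ) (v : ℕ) : cnt L v ≤ Multiset.card L :=
  Multiset.card_le_card (Multiset.filter_le _ _)

theorem cnt_cons (a : ℕ) (L : Multiset ℕ) (v : ℕ) :
    cnt (a ::ₘ L) v = cnt L v + if a ≤ v then 1 else 0 := by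
  unfold cnt
  rw [Multiset.filter_cons]
  split
  · simp [Multiset.singleton_add]
  · simp


theorem ins_ex (i : ℕ) (L : Multiset ℕ) : ∃ v, cnt L v + i ≤ v :=
  ⟨i + Multiset.card L, by have := cnt_le_card L (i + Multiset.card L); omega⟩

/-- The value obtained when "inserting" the letter `i` into the multiset `L`. -/
def vins (i : ℕ) (L : Multiset ℕ) : ℕ := Nat.find (ins_ex i L)

theorem vins_spec (i : ℕ) (L : Multiset ℕ) : cnt L (vins i L) + i ≤ vins i L :=
  Nat.find_spec (ins_ex i L)

theorem vins_min {i : ℕ} {L : Multiset ℕ} {w : ℕ} (h : w < vins i L) :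
    ¬ (cnt L w + i ≤ w) := Nat.find_min (ins_ex i L) h

theorem vins_le {i : ℕ} {L : Multiset ℕ} {w : ℕ} (h : cnt L w + i ≤ w) : vins i L ≤ w :=
  Nat.find_min' (ins_ex i L) h

/-- Insertion of a letter into a multiset. -/
def ins (i : ℕ) (L : Multiset ℕ) : Multiset ℕ := vins i L ::ₘ L

theorem vins_lt {i j : ℕ} (hij : i ≤ j) (L : Multiset ℕ) : vins i L < vins (j+1) L := by
  have hs : cnt L (vins (j+1) L) + (j+1) ≤ vins (j+1) L := vins_spec _ _
  have h1 : vins i L ≤ vins (j+1) L - 1 := by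
    apply vins_le
    have h2 := cnt_mono L (Nat.sub_le (vins (j+1) L) 1)
    omega
  omega

theorem ins_swap {i j : ℕ} (hij : i ≤ j) (L : Multiset ℕ) :
    ins j (ins i L) = ins i (ins (j+1) L) := by
  have hlt : vins i L < vins (j+1) L := vins_lt hij L
  have hspec1 : cnt L (vins i L) + i ≤ vins i L := vins_spec _ _
  have hspec2 : cnt L (vins (j+1) L) + (j+1) ≤ vins (j+1) L := vins_spec _ _
  -- Step A : vins i (vins (j+1) L ::ₘ L) = vins i L
  have hA : vins i (vins (j+1) L ::ₘ L) = vins i L := by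
    apply le_antisymm
    · apply vins_le
      rw [cnt_cons, if_neg (by omega)]
      omega
    · by_contra hcon
      push_neg at hcon
      have h1 := vins_min (i := i) (L := L) (w := vins i (vins (j+1) L ::ₘ L)) hcon
      have h2 := vins_spec i (vins (j+1) L ::ₘ L)
      rw [cnt_cons] at h2
      have h3 := cnt_mono L (le_of_lt (lt_trans hcon hlt))
      split at h2 <;> omega
  -- Step B : vins j (vins i L ::ₘ L) = vins (j+1) L
  have hB : vins j (vins i L ::ₘ L) = vins (j+1) L := by
    apply le_antisymm
    · apply vins_le
      rw [cnt_cons, if_pos (by omega)]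
      omega
    · by_contra hcon
      push_neg at hcon
      have hs := vins_spec j (vins i L ::ₘ L)
      rw [cnt_cons] at hs
      by_cases hcase : vins i L ≤ vins j (vins i L ::ₘ L)
      · rw [if_pos hcase] at hs
        have := vins_min (i := j+1) (L := L) (w := vins j (vins i L ::ₘ L)) hcon
        omega
      · rw [if_neg hcase] at hs
        have hwv : vins j (vins i L ::ₘ L) < vins i L := by omega
        have := vins_min (i := i) (L := L) (w := vins j (vins i L ::ₘ L)) hwv
        omega
  show vins j (vins i L ::ₘ L) ::ₘ (vins i L ::ₘ L)
      = vins i (vins (j+1) L ::ₘ L) ::ₘ (vins (j+1) L ::ₘ L)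
  rw [hA, hB, Multiset.cons_swap]

theorem ins_zero_ne_one (L : Multiset ℕ) : ins 0 L ≠ ins 1 L := by
  intro h
  have hv : vins 0 L = vins 1 L := by
    have h' : ({vins 0 L} : Multiset ℕ) + L = {vins 1 L} + L := by
      rwa [Multiset.singleton_add, Multiset.singleton_add]
    have := add_right_cancel h'
    simpa using this
  have h1 := vins_spec 1 L
  have hpos : 1 ≤ vins 1 L := by omega
  have : vins 0 L ≤ vins 1 L - 1 := by
    apply vins_le
    have := cnt_mono L (Nat.sub_le (vins 1 L) 1)
    omega
  omega

/-- The insertion functions as an anti-representation. -/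
def insF (i : ℕ) : Function.End (Multiset ℕ) := ins i

def FM : FreeMonoid ℕ →* (Function.End (Multiset ℕ))ᵐᵒᵖ :=
  FreeMonoid.lift (fun i => MulOpposite.op (insF i))

theorem FM_resp {x y : FreeMonoid ℕ} (h : KrumlRel x y) : FM x = FM y := by
  cases h with
  | rel i j hij =>
    rw [map_mul, map_mul]
    show MulOpposite.op (insF i) * MulOpposite.op (insF j)
        = MulOpposite.op (insF (j+1)) * MulOpposite.op (insF i)
    rw [← MulOpposite.op_mul, ← MulOpposite.op_mul]
    congr 1
    funext L
    show insF j (insF i L) = insF i (insF (j+1) L)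
    exact ins_swap hij L

/-- The model homomorphism. -/
def Phi : KrumlMonoid →* (Function.End (Multiset ℕ))ᵐᵒᵖ :=
  Con.lift _ FM (Con.conGen_le.2 (fun x y h => (Con.ker_rel FM).2 (FM_resp h)))

theorem no_collapse (u : KrumlMonoid) : u * ak 0 ≠ u * ak 1 := by
  intro h
  have h2 := congrArg Phi h
  rw [map_mul, map_mul] at h2
  have hak : ∀ i, Phi (ak i) = MulOpposite.op (insF i) := fun i => by
    show Con.lift _ _ _ ((conGen KrumlRel).mk' _) = _
    rw [Con.lift_mk']
    exact FreeMonoid.lift_eval_of _ i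
  rw [hak 0, hak 1] at h2
  set R := MulOpposite.unop (Phi u) with hR
  have h3 : insF 0 * R = insF 1 * R := by
    have := congrArg MulOpposite.unop h2
    simpa [← hR] using this
  have h4 := congrFun h3 (0 : Multiset ℕ)
  exact ins_zero_ne_one (R 0) h4


section Act

variable {I : Type} [LinearOrder I] [DecidableEq I]

/-- The number of elements of `T` below `x`. -/
def rk (T : Finset I) (x : I) : ℕ := (T.filter (· < x)).card

/-- The connecting element of `S` from stage `T` to stage `T''` (for `T ⊆ T''`):
insert the elements of `T'' \ T` one at a time, largest first. -/
noncomputable def cf (T'' T : Finset I) : KrumlMonoid :=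
  if h : (T'' \ T).Nonempty then
    cf T'' (insert ((T'' \ T).max' h) T) * ak (rk T ((T'' \ T).max' h))
  else 1
termination_by (T'' \ T).card
decreasing_by
  rw [Finset.sdiff_insert]
  exact Finset.card_erase_lt_of_mem (Finset.max'_mem _ h)

theorem cf_self (T : Finset I) : cf T T = 1 := by
  rw [cf]
  simp

theorem rk_mono {T : Finset I} {x y : I} (h : x < y) : rk T x ≤ rk T y := by
  apply Finset.card_le_card
  exact Finset.monotone_filter_right T (fun a _ (ha : a < x) => lt_trans ha h)

theorem cf_insert :
    ∀ (n : ℕ) (T'' T : Finset I) (x : I), (T'' \ T).card = n → T ⊆ T'' → x ∈ T'' → x ∉ T →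
      cf T'' T = cf T'' (insert x T) * ak (rk T x) := by
  intro n
  induction n using Nat.strong_induction_on with
  | _ n IH =>
    intro T'' T x hcard hsub hxmem hxnot
    have hxD : x ∈ T'' \ T := Finset.mem_sdiff.2 ⟨hxmem, hxnot⟩
    have hD : (T'' \ T).Nonempty := ⟨x, hxD⟩
    set M := (T'' \ T).max' hD with hM
    have hMD : M ∈ T'' \ T := Finset.max'_mem _ hD
    have hMmem : M ∈ T'' := (Finset.mem_sdiff.1 hMD).1
    have hMnot : M ∉ T := (Finset.mem_sdiff.1 hMD).2
    have hcf : cf T'' T = cf T'' (insert M T) * ak (rk T M) := by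
      rw [cf]; rw [dif_pos hD]
    by_cases hxM : x = M
    · rw [hcf, hxM]
    · have hxltM : x < M := lt_of_le_of_ne (Finset.le_max' _ x hxD) hxM
      have hcard' : (T'' \ insert M T).card < n := by
        rw [Finset.sdiff_insert, ← hcard]
        exact Finset.card_erase_lt_of_mem hMD
      -- apply IH to (insert M T) and x
      have step1 : cf T'' (insert M T) =
          cf T'' (insert x (insert M T)) * ak (rk (insert M T) x) := by
        apply IH _ hcard' T'' (insert M T) x rfl
        · intro a ha
          rcases Finset.mem_insert.1 ha with rfl | ha
          · exact hMmem
          · exact hsub ha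
        · exact hxmem
        · intro hx
          rcases Finset.mem_insert.1 hx with rfl | hx
          · exact hxM rfl
          · exact hxnot hx
      have hrk1 : rk (insert M T) x = rk T x := by
        unfold rk
        rw [Finset.filter_insert, if_neg (by exact not_lt.2 (le_of_lt hxltM))]
      -- now unfold cf T'' (insert x T)
      have hxTD : (T'' \ insert x T).Nonempty := by
        refine ⟨M, Finset.mem_sdiff.2 ⟨hMmem, ?_⟩⟩
        intro hM'
        rcases Finset.mem_insert.1 hM' with h' | h'
        · exact absurd h'.symm (ne_of_lt hxltM)
        · exact hMnot h'
      have hMmax : (T'' \ insert x T).max' hxTD = M := by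
        apply le_antisymm
        · apply Finset.max'_le
          intro y hy
          rcases Finset.mem_sdiff.1 hy with ⟨hy1, hy2⟩
          apply Finset.le_max' _ y
          refine Finset.mem_sdiff.2 ⟨hy1, fun hyT => hy2 (Finset.mem_insert_of_mem hyT)⟩
        · apply Finset.le_max'
          refine Finset.mem_sdiff.2 ⟨hMmem, ?_⟩
          intro hM'
          rcases Finset.mem_insert.1 hM' with h' | h'
          · exact absurd h'.symm (ne_of_lt hxltM)
          · exact hMnot h'
      have hcf2 : cf T'' (insert x T) =
          cf T'' (insert M (insert x T)) * ak (rk (insert x T) M) := by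
        rw [cf]; rw [dif_pos hxTD, hMmax]
      have hrk2 : rk (insert x T) M = rk T M + 1 := by
        unfold rk
        rw [Finset.filter_insert, if_pos hxltM]
        rw [Finset.card_insert_of_notMem]
        intro hx
        exact hxnot (Finset.mem_of_mem_filter x hx)
      have hcomm : insert x (insert M T) = insert M (insert x T) := Finset.insert_comm x M T
      have hrel : ak (rk T x) * ak (rk T M) = ak (rk T M + 1) * ak (rk T x) :=
        ak_rel (rk_mono hxltM)
      rw [hcf, step1, hrk1, hcomm, mul_assoc, hrel, ← mul_assoc, ← hrk2, ← hcf2]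

theorem cf_cocycle :
    ∀ (n : ℕ) (T'' T' T : Finset I), (T' \ T).card = n → T ⊆ T' → T' ⊆ T'' →
      cf T'' T = cf T'' T' * cf T' T := by
  intro n
  induction n using Nat.strong_induction_on with
  | _ n IH =>
    intro T'' T' T hcard h1 h2
    rcases Nat.eq_zero_or_pos n with rfl | hpos
    · have : T' \ T = ∅ := Finset.card_eq_zero.1 hcard
      have hTT : T' = T := Finset.Subset.antisymm (Finset.sdiff_eq_empty_iff_subset.1 this) h1
      subst hTT
      rw [cf_self, mul_one]
    · have hD : (T' \ T).Nonempty := Finset.card_pos.1 (hcard ▸ hpos)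
      obtain ⟨x, hxD⟩ := hD
      rcases Finset.mem_sdiff.1 hxD with ⟨hxT', hxT⟩
      have e1 : cf T'' T = cf T'' (insert x T) * ak (rk T x) :=
        cf_insert _ T'' T x rfl (Finset.Subset.trans h1 h2) (h2 hxT') hxT
      have e2 : cf T' T = cf T' (insert x T) * ak (rk T x) :=
        cf_insert _ T' T x rfl h1 hxT' hxT
      have hcard' : (T' \ insert x T).card < n := by
        rw [Finset.sdiff_insert, ← hcard]
        exact Finset.card_erase_lt_of_mem hxD
      have e3 : cf T'' (insert x T) = cf T'' T' * cf T' (insert x T) := by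
        apply IH _ hcard' T'' T' (insert x T) rfl
        · intro a ha
          rcases Finset.mem_insert.1 ha with rfl | ha
          · exact hxT'
          · exact h1 ha
        · exact h2
      rw [e1, e3, e2, mul_assoc]

end Act


section Act2

variable {I : Type} [LinearOrder I] [DecidableEq I]

/-- The relation defining the colimit act. -/
def arel (p q : Finset I × KrumlMonoid) : Prop :=
  ∃ U : Finset I, p.1 ⊆ U ∧ q.1 ⊆ U ∧ cf U p.1 * p.2 = cf U q.1 * q.2

theorem arel_equiv : Equivalence (arel (I := I)) := by
  constructor
  · intro p
    exact ⟨p.1, Finset.Subset.refl _, Finset.Subset.refl _, rfl⟩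
  · rintro p q ⟨U, h1, h2, h3⟩
    exact ⟨U, h2, h1, h3.symm⟩
  · rintro p q r ⟨U, hU1, hU2, hU3⟩ ⟨V, hV1, hV2, hV3⟩
    refine ⟨U ∪ V, Finset.Subset.trans hU1 Finset.subset_union_left,
      Finset.Subset.trans hV2 Finset.subset_union_right, ?_⟩
    have c1 : cf (U ∪ V) p.1 = cf (U ∪ V) U * cf U p.1 :=
      cf_cocycle _ _ _ _ rfl hU1 Finset.subset_union_left
    have c2 : cf (U ∪ V) q.1 = cf (U ∪ V) U * cf U q.1 :=
      cf_cocycle _ _ _ _ rfl hU2 Finset.subset_union_left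
    have c3 : cf (U ∪ V) q.1 = cf (U ∪ V) V * cf V q.1 :=
      cf_cocycle _ _ _ _ rfl hV1 Finset.subset_union_right
    have c4 : cf (U ∪ V) r.1 = cf (U ∪ V) V * cf V r.1 :=
      cf_cocycle _ _ _ _ rfl hV2 Finset.subset_union_right
    calc cf (U ∪ V) p.1 * p.2 = cf (U ∪ V) U * (cf U p.1 * p.2) := by
          rw [c1, mul_assoc]
      _ = cf (U ∪ V) U * (cf U q.1 * q.2) := by rw [hU3]
      _ = cf (U ∪ V) q.1 * q.2 := by rw [c2, mul_assoc]
      _ = cf (U ∪ V) V * (cf V q.1 * q.2) := by rw [c3, mul_assoc]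
      _ = cf (U ∪ V) V * (cf V r.1 * r.2) := by rw [hV3]
      _ = cf (U ∪ V) r.1 * r.2 := by rw [c4, mul_assoc]

/-- The setoid for the colimit act. -/
def aSetoid (I : Type) [LinearOrder I] [DecidableEq I] : Setoid (Finset I × KrumlMonoid) :=
  ⟨arel, arel_equiv⟩

/-- The colimit act: a directed colimit of cyclic free acts indexed by finite subsets of `I`. -/
def AQ (I : Type) [LinearOrder I] [DecidableEq I] : Type := Quotient (aSetoid I)

/-- The action on the colimit act. -/
def actA : AQ I → KrumlMonoid → AQ I := fun q s =>
  Quotient.map (fun p => (p.1, p.2 * s))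
    (by
      rintro p q ⟨U, h1, h2, h3⟩
      exact ⟨U, h1, h2, by rw [← mul_assoc, h3, mul_assoc]⟩) q

theorem actA_mk (T : Finset I) (w s : KrumlMonoid) :
    actA (Quotient.mk (aSetoid I) (T, w)) s = Quotient.mk (aSetoid I) (T, w * s) := rfl

theorem isRightAct_actA : IsRightAct (actA (I := I)) := by
  refine ⟨⟨Quotient.mk (aSetoid I) (∅, 1)⟩, ?_, ?_⟩
  · intro x
    induction x using Quotient.ind with
    | _ p => rcases p with ⟨T, w⟩; rw [actA_mk, mul_one]
  · intro x s t
    induction x using Quotient.ind with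
    | _ p => rcases p with ⟨T, w⟩; rw [actA_mk, actA_mk, actA_mk, mul_assoc]

theorem stronglyFlat_actA : StronglyFlat (actA (I := I)) := by
  constructor
  · -- Condition (P)
    intro x y s t h
    induction x using Quotient.ind with
    | _ p =>
      induction y using Quotient.ind with
      | _ q =>
        rcases p with ⟨T₁, w₁⟩
        rcases q with ⟨T₂, w₂⟩
        rw [actA_mk, actA_mk] at h
        obtain ⟨U, hU1, hU2, hU3⟩ := Quotient.exact h
        refine ⟨Quotient.mk (aSetoid I) (U, 1), cf U T₁ * w₁, cf U T₂ * w₂, ?_, ?_, ?_⟩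
        · rw [actA_mk]
          apply Quotient.sound
          exact ⟨U, hU1, Finset.Subset.refl _, by rw [cf_self, one_mul, one_mul]⟩
        · rw [actA_mk]
          apply Quotient.sound
          exact ⟨U, hU2, Finset.Subset.refl _, by rw [cf_self, one_mul, one_mul]⟩
        · rw [mul_assoc, mul_assoc]
          exact hU3
  · -- Condition (E)
    intro x s t h
    induction x using Quotient.ind with
    | _ p =>
      rcases p with ⟨T, w⟩
      rw [actA_mk, actA_mk] at h
      obtain ⟨U, hU1, hU2, hU3⟩ := Quotient.exact h
      refine ⟨Quotient.mk (aSetoid I) (U, 1), cf U T * w, ?_, ?_⟩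
      · rw [actA_mk]
        apply Quotient.sound
        exact ⟨U, hU1, Finset.Subset.refl _, by rw [cf_self, one_mul, one_mul]⟩
      · rw [mul_assoc, mul_assoc]
        exact hU3

/-- `cf` on a one-step extension. -/
theorem cf_insert_single {T : Finset I} {x : I} (hx : x ∉ T) :
    cf (insert x T) T = ak (rk T x) := by
  have := cf_insert ((insert x T \ T).card) (insert x T) T x rfl
    (Finset.subset_insert _ _) (Finset.mem_insert_self _ _) hx
  rw [cf_self, one_mul] at this
  exact this

theorem cf_pair_lo {i j : I} (hij : i < j) : cf {i, j} {i} = ak 1 := by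
  have hpair : ({i, j} : Finset I) = insert j {i} := Finset.pair_comm i j
  rw [hpair, cf_insert_single (by simp [ne_of_gt hij])]
  congr 1
  unfold rk
  rw [Finset.filter_singleton, if_pos hij, Finset.card_singleton]

theorem cf_pair_hi {i j : I} (hij : i < j) : cf {i, j} {j} = ak 0 := by
  show cf (insert i {j}) {j} = ak 0
  rw [cf_insert_single (by simp [ne_of_lt hij])]
  congr 1
  unfold rk
  rw [Finset.filter_singleton, if_neg (by exact not_lt.2 (le_of_lt hij)), Finset.card_empty]

end Act2


/-- An index type with no pre-existing order instances. -/
def Idx (P : Type) : Type := Set P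

theorem final :
    ¬ ∃ (P : Type) (actP : P → KrumlMonoid → P), IsRightAct actP ∧ StronglyFlat actP ∧
      ∃ g : P → Unit,
        (∀ x s, g (actP x s) = g x) ∧
        ∀ (P' : Type) (actP' : P' → KrumlMonoid → P'),
          IsRightAct actP' → StronglyFlat actP' →
            ∀ g' : P' → Unit, (∀ x s, g' (actP' x s) = g' x) →
              ∃ f : P' → P, (∀ x s, f (actP' x s) = actP (f x) s) ∧ g ∘ f = g' := by
  rintro ⟨P, actP, -, hSF, g, -, hpre⟩
  classical
  letI : LinearOrder (Idx P) := IsWellOrder.linearOrder WellOrderingRel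
  obtain ⟨f, hf, -⟩ := hpre (AQ (Idx P)) actA isRightAct_actA stronglyFlat_actA
    (fun _ => ()) (fun _ _ => rfl)
  -- helper: a strict pair with equal images is impossible
  have key : ∀ i j : Idx P, i < j →
      f (Quotient.mk (aSetoid (Idx P)) ({i}, 1)) =
        f (Quotient.mk (aSetoid (Idx P)) ({j}, 1)) → False := by
    intro i j hij heq
    set T : Finset (Idx P) := {i, j} with hT
    have e1 : (Quotient.mk (aSetoid (Idx P)) ({i}, 1) : AQ (Idx P)) =
        actA (Quotient.mk (aSetoid (Idx P)) (T, 1)) (ak 1) := by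
      rw [actA_mk]
      apply Quotient.sound
      refine ⟨T, ?_, Finset.Subset.refl _, ?_⟩
      · intro a ha
        rw [Finset.mem_singleton] at ha
        rw [ha, hT]
        exact Finset.mem_insert_self _ _
      · show cf T {i} * 1 = cf T T * (1 * ak 1)
        rw [cf_pair_lo hij, cf_self, mul_one, one_mul, one_mul]
    have e2 : (Quotient.mk (aSetoid (Idx P)) ({j}, 1) : AQ (Idx P)) =
        actA (Quotient.mk (aSetoid (Idx P)) (T, 1)) (ak 0) := by
      rw [actA_mk]
      apply Quotient.sound
      refine ⟨T, ?_, Finset.Subset.refl _, ?_⟩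
      · intro a ha
        rw [Finset.mem_singleton] at ha
        rw [ha, hT]
        exact Finset.mem_insert_of_mem (Finset.mem_singleton_self _)
      · show cf T {j} * 1 = cf T T * (1 * ak 0)
        rw [cf_pair_hi hij, cf_self, mul_one, one_mul, one_mul]
    rw [e1, e2] at heq
    replace heq := (hf _ _).symm.trans (heq.trans (hf _ _))
    obtain ⟨z, u, -, hu⟩ := hSF.2 _ _ _ heq
    exact no_collapse u hu.symm
  have hninj := Function.cantor_injective (fun s : Set P => f (Quotient.mk (aSetoid (Idx P)) ({(show Idx P from s)}, 1)))
  rw [Function.Injective] at hninj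
  push_neg at hninj
  obtain ⟨i, j, heq, hne⟩ := hninj
  have hne' : (show Idx P from i) ≠ (show Idx P from j) := hne
  rcases lt_or_gt_of_ne hne' with h | h
  · exact key _ _ h heq
  · exact key _ _ h heq.symm

end KrumlProof


/-- The one-element right `S`-act `Θ_S` (here `Unit` with the trivial action `u·s = u`)
has no `SF`-precover: there is no `S`-map `g : P → Θ_S` with `P` a strongly flat right
`S`-act such that every `S`-map `g' : P' → Θ_S` from a strongly flat right `S`-act `P'`
factors as `g' = g ∘ f` for some `S`-map `f : P' → P`. -/
theorem krumlMonoid_no_SF_precover :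
    ¬ ∃ (P : Type) (actP : P → KrumlMonoid → P), IsRightAct actP ∧ StronglyFlat actP ∧
      ∃ g : P → Unit,
        (∀ x s, g (actP x s) = g x) ∧
        ∀ (P' : Type) (actP' : P' → KrumlMonoid → P'),
          IsRightAct actP' → StronglyFlat actP' →
            ∀ g' : P' → Unit, (∀ x s, g' (actP' x s) = g' x) →
              ∃ f : P' → P, (∀ x s, f (actP' x s) = actP (f x) s) ∧ g ∘ f = g' :=
  KrumlProof.final
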